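/- Let G be a one-dimensional geometric graph on n vertices with positions x(1) ≤ ⋯ ≤ x(n) in ℝ, where i and j are adjacent iff |x(i) − x(j)| ≤ ρ. If G is r-connected, then G is ⌊r/2⌋-robust. -/

import Mathlib

open SimpleGraph

variable {V : Type*}

/-- A set `S` is `r`-reachable if some vertex in `S` has at least `r` neighbors outside `S`. -/
def rReachable (G : SimpleGraph V) (r : ℕ) (S : Set V) : Prop :=
  ∃ i ∈ S, r ≤ ((G.neighborSet i) \ S).ncard

/-- A graph is `r`-robust if for every pair of nonempty disjoint vertex subsets,
at least one is `r`-reachable. -/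
def rRobust (G : SimpleGraph V) (r : ℕ) : Prop :=
  ∀ A B : Set V, A.Nonempty → B.Nonempty → Disjoint A B →
    rReachable G r A ∨ rReachable G r B

/-- A graph is `r`-connected if it has more than `r` vertices and removing any set of
fewer than `r` vertices leaves the graph connected. -/
def rConnected [Fintype V] (G : SimpleGraph V) (r : ℕ) : Prop :=
  r < Fintype.card V ∧ ∀ T : Set V, T.ncard < r → (G.induce Tᶜ).Connected

/-- One-dimensional geometric graph: distinct vertices `i`, `j` are adjacent iff
`|x i - x j| ≤ ρ`. -/
def geomGraph {n : ℕ} (x : Fin n → ℝ) (ρ : ℝ) : SimpleGraph (Fin n) :=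
  SimpleGraph.fromRel fun i j => |x i - x j| ≤ ρ

section Aux

variable {n : ℕ} {x : Fin n → ℝ} {ρ : ℝ}

lemma geom_adj_iff {i j : Fin n} :
    (geomGraph x ρ).Adj i j ↔ i ≠ j ∧ |x i - x j| ≤ ρ := by
  constructor
  · rintro ⟨hne, h | h⟩
    · exact ⟨hne, h⟩
    · exact ⟨hne, by rwa [abs_sub_comm]⟩
  · rintro ⟨hne, h⟩; exact ⟨hne, Or.inl h⟩

/-- Every vertex in an `r`-connected graph has degree at least `r`. -/
lemma deg_lemma {G : SimpleGraph (Fin n)} {r : ℕ} (hconn : rConnected G r) (v : Fin n) :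
    r ≤ (G.neighborSet v).ncard := by
  by_contra hlt
  push_neg at hlt
  set T := G.neighborSet v with hT
  have hconn2 := hconn.2 T hlt
  have hvT : v ∈ Tᶜ := fun h => G.irrefl h
  obtain ⟨w, hw⟩ : ∃ w : Fin n, w ∉ T ∪ {v} := by
    by_contra hall
    push_neg at hall
    have h1 : (Set.univ : Set (Fin n)).ncard ≤ (T ∪ {v}).ncard :=
      Set.ncard_le_ncard (fun y _ => hall y) (Set.toFinite _)
    have h2 : (T ∪ {v}).ncard ≤ T.ncard + 1 :=
      le_trans (Set.ncard_union_le _ _) (by simp)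
    have h3 : (Set.univ : Set (Fin n)).ncard = n := by
      simp [Set.ncard_univ]
    have h4 := hconn.1
    simp only [Fintype.card_fin] at h4
    omega
  have hwT : w ∈ Tᶜ := fun h => hw (Set.mem_union_left _ h)
  have hwv : w ≠ v := fun h => hw (Set.mem_union_right _ (by simp [h]))
  obtain ⟨p⟩ := hconn2.preconnected ⟨v, hvT⟩ ⟨w, hwT⟩
  obtain ⟨d, _, hd1, hd2⟩ := p.exists_boundary_dart {u : ↥Tᶜ | (u : Fin n) = v}
    (by simp) (by simpa using hwv)
  have hadj : G.Adj (d.fst : Fin n) (d.snd : Fin n) := d.adj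
  rw [Set.mem_setOf_eq] at hd1
  rw [hd1] at hadj
  exact d.snd.2 hadj

/-- Cut lemma: either all smaller vertices are adjacent to `b`, or `b` has at least `r`
smaller neighbors. -/
lemma cut_lemma (hx : Monotone x) {r : ℕ}
    (hconn : rConnected (geomGraph x ρ) r) (b : Fin n) :
    (∀ j, j < b → (geomGraph x ρ).Adj b j) ∨
      r ≤ (((geomGraph x ρ).neighborSet b) ∩ {j | j < b}).ncard := by
  set G := geomGraph x ρ with hG
  set S : Set (Fin n) := G.neighborSet b ∩ {j | j < b} with hS
  by_cases hr : r ≤ S.ncard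
  · exact Or.inr hr
  · left
    intro j hj
    by_contra hadj
    have hconn2 := hconn.2 S (lt_of_not_ge hr)
    have hjS : j ∈ Sᶜ := fun hmem => hadj hmem.1
    have hbS : b ∈ Sᶜ := fun hmem => lt_irrefl b hmem.2
    obtain ⟨p⟩ := hconn2.preconnected ⟨j, hjS⟩ ⟨b, hbS⟩
    obtain ⟨d, _, hd1, hd2⟩ := p.exists_boundary_dart {u : ↥Sᶜ | (u : Fin n) < b}
      (by simpa using hj) (by simp)
    rw [Set.mem_setOf_eq] at hd1
    rw [Set.mem_setOf_eq] at hd2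
    push_neg at hd2
    have hadj' : (geomGraph x ρ).Adj (d.fst : Fin n) (d.snd : Fin n) := d.adj
    obtain ⟨hne, habs⟩ := geom_adj_iff.mp hadj'
    have hxw : x b ≤ x (d.snd : Fin n) := hx hd2
    have hxu : x (d.fst : Fin n) ≤ x b := hx (le_of_lt hd1)
    have habs' : |x b - x (d.fst : Fin n)| ≤ ρ := by
      rw [abs_sub_le_iff] at habs ⊢
      constructor
      · linarith [habs.2]
      · linarith [habs.2]
    have hadjb : G.Adj b (d.fst : Fin n) :=
      geom_adj_iff.mpr ⟨fun h => lt_irrefl b (h ▸ hd1), habs'⟩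
    exact d.fst.2 ⟨hadjb, hd1⟩

lemma main_aux (hx : Monotone x) {r : ℕ}
    (hconn : rConnected (geomGraph x ρ) r) {A B : Set (Fin n)} (hdisj : Disjoint A B)
    {a b : Fin n} (haA : a ∈ A) (hbB : b ∈ B)
    (hbmin : ∀ v ∈ B, b ≤ v) (hab : a < b)
    (hnA : (((geomGraph x ρ).neighborSet a) \ A).ncard < r / 2)
    (hnB : (((geomGraph x ρ).neighborSet b) \ B).ncard < r / 2) : False := by
  rcases cut_lemma hx hconn b with hall | hbig
  · -- all j < b are adjacent to b
    have hdeg : r ≤ ((geomGraph x ρ).neighborSet a).ncard := deg_lemma hconn a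
    -- N(a) ∩ A ⊆ N(b) \ B
    have hsub : ((geomGraph x ρ).neighborSet a) ∩ A ⊆ ((geomGraph x ρ).neighborSet b) \ B := by
      rintro v ⟨hvN, hvA⟩
      have hvB : v ∉ B := (Set.disjoint_left.mp hdisj) hvA
      refine ⟨?_, hvB⟩
      have hvb : v ≠ b := fun h => hvB (h ▸ hbB)
      rcases lt_or_gt_of_ne hvb with hlt | hgt
      · exact hall v hlt
      · -- v > b : use adjacency with a
        have hvN' : (geomGraph x ρ).Adj a v := hvN
        obtain ⟨hne, habs⟩ := geom_adj_iff.mp hvN'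
        have hxa : x a ≤ x b := hx (le_of_lt hab)
        have hxb : x b ≤ x v := hx (le_of_lt hgt)
        show (geomGraph x ρ).Adj b v
        refine geom_adj_iff.mpr ⟨fun h => lt_irrefl b (h ▸ hgt), ?_⟩
        rw [abs_sub_le_iff] at habs ⊢
        constructor
        · linarith [habs.2]
        · linarith [habs.2]
    have hsplit : ((geomGraph x ρ).neighborSet a).ncard ≤
        (((geomGraph x ρ).neighborSet a) \ A).ncard +
          (((geomGraph x ρ).neighborSet a) ∩ A).ncard := by
      have heq : (geomGraph x ρ).neighborSet a =
          (((geomGraph x ρ).neighborSet a) \ A) ∪ (((geomGraph x ρ).neighborSet a) ∩ A) := by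
        rw [Set.diff_union_inter]
      calc ((geomGraph x ρ).neighborSet a).ncard
          = ((((geomGraph x ρ).neighborSet a) \ A) ∪
              (((geomGraph x ρ).neighborSet a) ∩ A)).ncard := by rw [← heq]
        _ ≤ _ := Set.ncard_union_le _ _
    have hle : (((geomGraph x ρ).neighborSet a) ∩ A).ncard ≤
        (((geomGraph x ρ).neighborSet b) \ B).ncard :=
      Set.ncard_le_ncard hsub (Set.toFinite _)
    omega
  · -- b has at least r smaller neighbors, all outside B
    have hsub : ((geomGraph x ρ).neighborSet b) ∩ {j | j < b} ⊆
        ((geomGraph x ρ).neighborSet b) \ B := by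
      rintro v ⟨hvN, hvlt⟩
      exact ⟨hvN, fun hvB => absurd (hbmin v hvB) (not_le_of_gt hvlt)⟩
    have hle : (((geomGraph x ρ).neighborSet b) ∩ {j | j < b}).ncard ≤
        (((geomGraph x ρ).neighborSet b) \ B).ncard :=
      Set.ncard_le_ncard hsub (Set.toFinite _)
    omega

end Aux

theorem stmt11 (n : ℕ) (x : Fin n → ℝ) (ρ : ℝ) (hρ : 0 < ρ)
    (hx : Monotone x) (r : ℕ) (hconn : rConnected (geomGraph x ρ) r) :
    rRobust (geomGraph x ρ) (r / 2) := by
  intro A B hA hB hdisj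
  by_contra h
  rw [not_or] at h
  obtain ⟨hA', hB'⟩ := h
  have hnA : ∀ i ∈ A, (((geomGraph x ρ).neighborSet i) \ A).ncard < r / 2 := by
    intro i hi
    by_contra hge
    exact hA' ⟨i, hi, le_of_not_gt hge⟩
  have hnB : ∀ i ∈ B, (((geomGraph x ρ).neighborSet i) \ B).ncard < r / 2 := by
    intro i hi
    by_contra hge
    exact hB' ⟨i, hi, le_of_not_gt hge⟩
  obtain ⟨a, haA, hamin⟩ := Set.exists_min_image A id (Set.toFinite A) hA
  obtain ⟨b, hbB, hbmin⟩ := Set.exists_min_image B id (Set.toFinite B) hB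
  have hne : a ≠ b := fun h => (Set.disjoint_left.mp hdisj haA) (h ▸ hbB)
  rcases lt_or_gt_of_ne hne with hab | hba
  · exact main_aux hx hconn hdisj haA hbB hbmin hab (hnA a haA) (hnB b hbB)
  · exact main_aux hx hconn hdisj.symm hbB haA hamin hba (hnB b hbB) (hnA a haA)
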